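/- Let c > 0 and define p : ℝ → GL(3,ℝ) by p(t) = [[1, (√(3c)/c)·sin(ct), -(3/(4c))·sin(2ct)], [0, 1, (√(3c)/c)·(1 - cos(ct))], [0, 0, 1]]. Then p(0) = I, p(t + 2π/c) = p(t) for all t, and p satisfies the left-invariant ODE p'(t) = p(t)·(√(3c)·cos(ct)·E₁₂ + √(3c)·sin(ct)·E₂₃ - (3/2)·E₁₃), where Eᵢⱼ denotes the 3×3 matrix with 1 in entry (i,j) and 0 elsewhere. -/

import Mathlib

open Real Matrix

/-- The explicit chain on the Heisenberg group with `M₃ = c ≠ 0`. -/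
noncomputable def heisenbergChain (c : ℝ) (t : ℝ) : Matrix (Fin 3) (Fin 3) ℝ :=
  !![1, Real.sqrt (3 * c) / c * Real.sin (c * t), -(3 / (4 * c)) * Real.sin (2 * c * t);
     0, 1, Real.sqrt (3 * c) / c * (1 - Real.cos (c * t));
     0, 0, 1]

/-- The right-hand side `p(t) · (√(3c)cos(ct)·E₁₂ + √(3c)sin(ct)·E₂₃ - (3/2)·E₁₃)`
of the chain ODE on `H₃`. -/
noncomputable def heisenbergChainRHS (c : ℝ) (t : ℝ) : Matrix (Fin 3) (Fin 3) ℝ :=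
  heisenbergChain c t *
    ((Real.sqrt (3 * c) * Real.cos (c * t)) • Matrix.single 0 1 (1 : ℝ) +
      (Real.sqrt (3 * c) * Real.sin (c * t)) • Matrix.single 1 2 (1 : ℝ) -
      (3 / 2 : ℝ) • Matrix.single 0 2 (1 : ℝ))

/-- The curve `heisenbergChain c` starts at the identity, is periodic with
period `2π/c`, and solves the left-invariant chain ODE
`p' = p·(√(3c)cos(ct)·E₁₂ + √(3c)sin(ct)·E₂₃ - (3/2)·E₁₃)` on `H₃`. -/
theorem stmt_7 (c : ℝ) (hc : 0 < c) :
    heisenbergChain c 0 = 1 ∧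
    (∀ t : ℝ, heisenbergChain c (t + 2 * π / c) = heisenbergChain c t) ∧
    (∀ t : ℝ, ∀ i j : Fin 3,
      HasDerivAt (fun u => heisenbergChain c u i j) (heisenbergChainRHS c t i j) t) := by
  have hc' : c ≠ 0 := hc.ne'
  have hsq : Real.sqrt 3 * Real.sqrt c * (Real.sqrt 3 * Real.sqrt c) = 3 * c := by
    rw [show Real.sqrt 3 * Real.sqrt c = Real.sqrt (3 * c) from
      (Real.sqrt_mul (by norm_num) c).symm]
    exact Real.mul_self_sqrt (by positivity)
  refine ⟨?_, ?_, ?_⟩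
  · ext i j
    fin_cases i <;> fin_cases j <;>
      simp [heisenbergChain, Matrix.one_apply, Matrix.vecHead, Matrix.vecTail]
  · intro t
    have h1 : c * (t + 2 * π / c) = c * t + 2 * π := by field_simp
    have h2 : 2 * c * (t + 2 * π / c) = 2 * c * t + (2 : ℕ) * (2 * π) := by
      push_cast; field_simp
    have hs : Real.sin (c * (t + 2 * π / c)) = Real.sin (c * t) := by
      rw [h1, Real.sin_add_two_pi]
    have hco : Real.cos (c * (t + 2 * π / c)) = Real.cos (c * t) := by
      rw [h1, Real.cos_add_two_pi]
    have hs2 : Real.sin (2 * c * (t + 2 * π / c)) = Real.sin (2 * c * t) := by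
      rw [h2, Real.sin_add_nat_mul_two_pi]
    ext i j
    fin_cases i <;> fin_cases j <;> simp [heisenbergChain, hs, hco, hs2]
  · intro t i j
    have hct : HasDerivAt (fun u : ℝ => c * u) c t := by
      simpa using (hasDerivAt_id t).const_mul c
    have h2ct : HasDerivAt (fun u : ℝ => 2 * c * u) (2 * c) t := by
      simpa using (hasDerivAt_id t).const_mul (2 * c)
    fin_cases i <;> fin_cases j <;>
      simp only [heisenbergChainRHS, heisenbergChain, Matrix.mul_apply, Fin.sum_univ_three,
        Matrix.single, Matrix.cons_val', Matrix.cons_val_zero, Matrix.cons_val_one,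
        Matrix.head_cons, Matrix.empty_val', Matrix.cons_val_fin_one, Matrix.head_fin_const,
        Matrix.cons_val_two, Matrix.tail_cons, Matrix.sub_apply, Matrix.add_apply,
        Matrix.smul_apply, Matrix.of_apply, smul_eq_mul] <;>
      norm_num [Fin.ext_iff]
    · exact hasDerivAt_const t 1
    · -- entry (0,1)
      have h := (hct.sin).const_mul (Real.sqrt 3 * Real.sqrt c / c)
      refine h.congr_deriv (Eq.symm ?_)
      field_simp
    · -- entry (0,2)
      have h := ((h2ct.sin).const_mul (3 / (4 * c))).neg
      refine h.congr_deriv (Eq.symm ?_)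
      have h2x : Real.cos (2 * c * t) = 1 - 2 * Real.sin (c * t) ^ 2 := by
        rw [show 2 * c * t = 2 * (c * t) by ring, Real.cos_two_mul']
        nlinarith [Real.sin_sq_add_cos_sq (c * t)]
      rw [h2x, show Real.sqrt 3 * Real.sqrt c / c * Real.sin (c * t) *
          (Real.sqrt 3 * Real.sqrt c * Real.sin (c * t)) =
          Real.sqrt 3 * Real.sqrt c * (Real.sqrt 3 * Real.sqrt c) * Real.sin (c * t) ^ 2 / c
        by ring, hsq]
      field_simp
      ring
    · exact hasDerivAt_const t 0
    · exact hasDerivAt_const t 1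
    · -- entry (1,2)
      have h := ((hct.cos).const_sub 1).const_mul (Real.sqrt 3 * Real.sqrt c / c)
      refine h.congr_deriv (Eq.symm ?_)
      field_simp
    · exact hasDerivAt_const t 0
    · exact hasDerivAt_const t 0
    · exact hasDerivAt_const t 1
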